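/- arXiv:2409.04839 — 8 statements merged into one kernel-verified Lean document; each statement's English description precedes it below -/
import Mathlib

section
/- Let p be an odd prime and K a cyclic number field of degree p and conductor n = p_1⋯p_s (p unramified), with Gal(K/ℚ) = ⟨θ⟩ and t = Tr_{ℚ(ζ_n)/K}(ζ_n), so that {t, θ(t), …, θ^{p-1}(t)} is an integral basis of O_K. For a prime divisor p_j of n, the prime ideal B_j of O_K above p_j, characterized as B_j = {Σ a_i θ^i(t) : Σ a_i ≡ 0 mod p_j}, satisfies B_j = p_j ℤ t + Σ_{i=1}^{p-1} ℤ (θ^i(t) − t). -/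
open NumberField

theorem stmt_3 (p : ℕ) (hp : p.Prime) (hodd : Odd p)
    (K : Type*) [Field K] [NumberField K]
    (hdeg : Module.finrank ℚ K = p)
    (θ : 𝓞 K ≃ₐ[ℤ] 𝓞 K) (t : 𝓞 K)
    (b : Module.Basis (Fin p) ℤ (𝓞 K)) (hb : ∀ i : Fin p, b i = (θ ^ (i : ℕ)) t)
    (q : ℕ) (hq : q.Prime) (hq1 : q % p = 1) (α : 𝓞 K) :
    ((q : ℤ) ∣ ∑ i, b.repr α i) ↔
      α ∈ Submodule.span ℤ
        (insert ((q : 𝓞 K) * t)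
          ((fun i : Fin p => (θ ^ (i : ℕ)) t - t) '' {i | (i : ℕ) ≠ 0})) := by
  haveI : NeZero p := ⟨hp.ne_zero⟩
  have ht : b 0 = t := by simpa using hb 0
  set S := Submodule.span ℤ
        (insert ((q : 𝓞 K) * t)
          ((fun i : Fin p => (θ ^ (i : ℕ)) t - t) '' {i | (i : ℕ) ≠ 0})) with hS
  have hqt0 : (q : 𝓞 K) * t = (q : ℤ) • b 0 := by
    rw [ht, zsmul_eq_mul]; push_cast; ring
  constructor
  · rintro ⟨d, hd⟩
    have hqt : ((q : 𝓞 K) * t) ∈ S := Submodule.subset_span (Set.mem_insert _ _)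
    have hbi : ∀ i : Fin p, (b i - t) ∈ S := by
      intro i
      by_cases h0 : (i : ℕ) = 0
      · have hi : i = 0 := Fin.ext (by simpa using h0)
        rw [hi, ht, sub_self]; exact S.zero_mem
      · exact Submodule.subset_span (Set.mem_insert_of_mem _ ⟨i, h0, by rw [hb i]⟩)
    have key : α = (∑ i : Fin p, b.repr α i • (b i - t)) + d • ((q : 𝓞 K) * t) := by
      calc α = ∑ i : Fin p, b.repr α i • b i := (b.sum_repr α).symm
        _ = ∑ i : Fin p, (b.repr α i • (b i - t) + b.repr α i • t) := by
              simp [smul_sub]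
        _ = (∑ i : Fin p, b.repr α i • (b i - t)) + (∑ i : Fin p, b.repr α i) • t := by
              rw [Finset.sum_add_distrib, Finset.sum_smul]
        _ = _ := by
              rw [hd, mul_comm, mul_smul]
              congr 1
              rw [hqt0, ht]
    rw [key]
    exact S.add_mem (Submodule.sum_mem _ fun i _ => S.smul_mem _ (hbi i)) (S.smul_mem _ hqt)
  · intro hα
    let N : Submodule ℤ (𝓞 K) :=
      { carrier := {x | (q : ℤ) ∣ ∑ i, b.repr x i}
        add_mem' := by
          intro x y hx hy
          simpa [map_add, Finset.sum_add_distrib] using dvd_add hx hy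
        zero_mem' := by simp
        smul_mem' := by
          intro c x hx
          show (q : ℤ) ∣ ∑ i, b.repr (c • x) i
          simp only [map_smul, Finsupp.smul_apply, smul_eq_mul, ← Finset.mul_sum]
          exact hx.mul_left c }
    have hSN : S ≤ N := by
      rw [hS]
      apply Submodule.span_le.mpr
      rintro x (rfl | ⟨i, hi, rfl⟩)
      · show (q : ℤ) ∣ ∑ i, b.repr ((q : 𝓞 K) * t) i
        rw [hqt0]
        simp only [map_smul, Module.Basis.repr_self, Finsupp.smul_apply, smul_eq_mul,
          Finsupp.single_apply]
        simp [Finset.sum_ite_eq]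
      · show (q : ℤ) ∣ ∑ j, b.repr ((θ ^ (i : ℕ)) t - t) j
        rw [← hb i, ← ht]
        simp [map_sub, Module.Basis.repr_self, Finsupp.single_apply, Finset.sum_ite_eq',
          Finset.sum_sub_distrib]
    exact hSN hα
end

section
/- Let p be an odd prime and K the (unique) subfield of degree p of L = ℚ(ζ_{p²}), where ζ = ζ_{p²} is a primitive p²-th root of unity. Let λ = N_{L/K}(1 − ζ). Then p O_K = B^p where B is the principal ideal λ O_K. Equivalently, the prime of O_K above p is generated by the relative norm of 1 − ζ. -/
open NumberField

lemma bridge {L : Type*} [Field L] [CharZero L] (K : IntermediateField ℚ L)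
    (a b : 𝓞 K) (c : L) (hc : IsIntegral ℤ c)
    (h : algebraMap K L (algebraMap (𝓞 K) K a) * c = algebraMap K L (algebraMap (𝓞 K) K b)) :
    a ∣ b := by
  by_cases ha : a = 0
  · subst ha
    have hb : b = 0 := by simpa using h.symm
    simp [hb]
  · have haK : (algebraMap (𝓞 K) K a) ≠ 0 := by simpa using ha
    have haL : algebraMap K L (algebraMap (𝓞 K) K a) ≠ 0 := by simpa using haK
    have hcK : c = algebraMap K L ((algebraMap (𝓞 K) K b) / (algebraMap (𝓞 K) K a)) := by
      rw [map_div₀, eq_div_iff haL, mul_comm]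
      exact h
    rw [hcK] at hc
    have hint : IsIntegral ℤ ((algebraMap (𝓞 K) K b) / (algebraMap (𝓞 K) K a)) :=
      (isIntegral_algebraMap_iff (algebraMap K L).injective).mp hc
    refine ⟨⟨_, hint⟩, ?_⟩
    apply RingOfIntegers.coe_injective
    show (algebraMap (𝓞 K) K b) =
      (algebraMap (𝓞 K) K a) * ((algebraMap (𝓞 K) K b) / (algebraMap (𝓞 K) K a))
    rw [mul_div_cancel₀ _ haK]

lemma assocPR {L : Type*} [Field L] [CharZero L] {k : ℕ+} {ξ₁ ξ₂ : L}
    (h1 : IsPrimitiveRoot ξ₁ k) (h2 : IsPrimitiveRoot ξ₂ k) :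
    Associated (1 - h1.toInteger) (1 - h2.toInteger) := by
  have key : ∀ (η₁ η₂ : L) (g1 : IsPrimitiveRoot η₁ k) (g2 : IsPrimitiveRoot η₂ k),
      (1 - g1.toInteger) ∣ (1 - g2.toInteger) := by
    intro η₁ η₂ g1 g2
    have : NeZero (k : ℕ) := ⟨k.pos.ne'⟩
    obtain ⟨i, -, hi⟩ := g1.eq_pow_of_pow_eq_one g2.pow_eq_one
    have hpow : g1.toInteger ^ i = g2.toInteger := by
      ext; push_cast; exact hi
    rw [← hpow]
    exact one_sub_dvd_one_sub_pow _ i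
  exact associated_of_dvd_dvd (key _ _ h1 h2) (key _ _ h2 h1)

lemma p_assoc (p : ℕ) (hp : p.Prime) {L : Type*} [Field L] [CharZero L] (n : ℕ+)
    (hpn : (n : ℕ) = p ^ 2) (ζ : L) (hζ : IsPrimitiveRoot ζ (n : ℕ)) :
    Associated (p : 𝓞 L) ((1 - hζ.toInteger) ^ (p * (p - 1))) := by
  have := Fact.mk hp
  have hprodL : (p : L) = ∏ μ ∈ primitiveRoots (n : ℕ) L, (1 - μ) := by
    have h := Polynomial.cyclotomic_eq_prod_X_sub_primitiveRoots hζ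
    have he : Polynomial.eval 1 (Polynomial.cyclotomic (n : ℕ) L) = p := by
      rw [hpn]
      simpa using Polynomial.eval_one_cyclotomic_prime_pow (R := L) (p := p) 1
    rw [h, Polynomial.eval_prod] at he
    simp only [Polynomial.eval_sub, Polynomial.eval_X, Polynomial.eval_C,
      Polynomial.eval_one] at he
    exact he.symm
  have hmem : ∀ μ ∈ primitiveRoots (n : ℕ) L, IsPrimitiveRoot μ (n : ℕ) := fun μ hμ =>
    (mem_primitiveRoots n.pos).mp hμ
  have hprodO : (p : 𝓞 L) = ∏ x ∈ (primitiveRoots (n : ℕ) L).attach,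
      (1 - ((hmem x.1 x.2).toInteger (k := n))) := by
    apply RingOfIntegers.coe_injective
    push_cast
    rw [← Finset.prod_attach (primitiveRoots (n : ℕ) L) (fun μ => (1 : L) - μ)] at hprodL
    exact hprodL
  rw [hprodO]
  have hcard : (primitiveRoots (n : ℕ) L).card = p * (p - 1) := by
    rw [hζ.card_primitiveRoots, hpn, Nat.totient_prime_pow hp (by norm_num)]
    ring
  have h1 : Associated (∏ x ∈ (primitiveRoots (n : ℕ) L).attach,
      (1 - ((hmem x.1 x.2).toInteger (k := n))))
      (∏ _x ∈ (primitiveRoots (n : ℕ) L).attach, (1 - hζ.toInteger)) :=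
    Associated.prod _ _ _ (fun i _ => assocPR _ _)
  rwa [Finset.prod_const, Finset.card_attach, hcard] at h1

theorem aux (p : ℕ) (hp : p.Prime) (n : ℕ+) (hpn : (n : ℕ) = p ^ 2)
    (K : IntermediateField ℚ (CyclotomicField n ℚ))
    (hdeg : Module.finrank ℚ K = p)
    (ζ : CyclotomicField n ℚ)
    (hζ : IsPrimitiveRoot ζ (n : ℕ))
    (lam : 𝓞 K)
    (hlam : algebraMap (𝓞 K) K lam = Algebra.norm K ((1 : CyclotomicField n ℚ) - ζ)) :
    Ideal.span {(p : 𝓞 K)} = Ideal.span {lam} ^ p := by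
  have hfact := Fact.mk hp
  haveI : NeZero ((n : ℕ) : ℚ) := ⟨by exact_mod_cast n.ne_zero⟩
  haveI : IsCyclotomicExtension {(n : ℕ)} ℚ (CyclotomicField n ℚ) :=
    CyclotomicField.isCyclotomicExtension (n := (n : ℕ)) (K := ℚ)
  haveI : NumberField (CyclotomicField n ℚ) := IsCyclotomicExtension.numberField (S := {(n : ℕ)}) ℚ (CyclotomicField n ℚ)
  haveI : IsGalois ℚ (CyclotomicField n ℚ) := IsCyclotomicExtension.isGalois (S := {(n : ℕ)}) ℚ (CyclotomicField n ℚ)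
  -- ranks
  have hrankL : Module.finrank ℚ (CyclotomicField n ℚ) = p * (p - 1) := by
    rw [IsCyclotomicExtension.finrank (CyclotomicField n ℚ) (Polynomial.cyclotomic.irreducible_rat n.pos), hpn,
      Nat.totient_prime_pow hp (by norm_num)]
    ring
  have hrankKL : Module.finrank K (CyclotomicField n ℚ) = p - 1 := by
    have h := Module.finrank_mul_finrank ℚ K (CyclotomicField n ℚ)
    rw [hdeg, hrankL] at h
    exact Nat.eq_of_mul_eq_mul_left hp.pos h
  have hcardAut : Fintype.card ((CyclotomicField n ℚ) ≃ₐ[K] (CyclotomicField n ℚ)) = p - 1 := by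
    rw [← Nat.card_eq_fintype_card, IsGalois.card_aut_eq_finrank, hrankKL]
  -- lamO in 𝓞 (CyclotomicField n ℚ)
  have hlamint : IsIntegral ℤ (algebraMap K (CyclotomicField n ℚ) (algebraMap (𝓞 K) K lam)) :=
    (isIntegral_algebraMap_iff (algebraMap K (CyclotomicField n ℚ)).injective).mpr lam.isIntegral_coe
  set lamO : 𝓞 (CyclotomicField n ℚ) := ⟨algebraMap K (CyclotomicField n ℚ) (algebraMap (𝓞 K) K lam), hlamint⟩ with hlamO
  have hnormprod : algebraMap K (CyclotomicField n ℚ) (Algebra.norm K ((1 : (CyclotomicField n ℚ)) - ζ)) = ∏ σ : (CyclotomicField n ℚ) ≃ₐ[K] (CyclotomicField n ℚ), (1 - σ ζ) := by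
    rw [Algebra.norm_eq_prod_automorphisms]
    simp
  have hlamO_eq : lamO = ∏ σ : (CyclotomicField n ℚ) ≃ₐ[K] (CyclotomicField n ℚ),
      (1 - ((hζ.map_of_injective σ.injective).toInteger (k := n))) := by
    apply RingOfIntegers.coe_injective
    have hc : (algebraMap (𝓞 (CyclotomicField n ℚ)) (CyclotomicField n ℚ)) (∏ σ : (CyclotomicField n ℚ) ≃ₐ[K] (CyclotomicField n ℚ),
        (1 - ((hζ.map_of_injective σ.injective).toInteger (k := n))))
        = ∏ σ : (CyclotomicField n ℚ) ≃ₐ[K] (CyclotomicField n ℚ), (1 - σ ζ) := by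
      push_cast
      exact Finset.prod_congr rfl (fun σ _ => rfl)
    rw [hc]
    show algebraMap K (CyclotomicField n ℚ) (algebraMap (𝓞 K) K lam) = _
    rw [hlam, hnormprod]
  have hPlam : Associated lamO ((1 - hζ.toInteger) ^ (p - 1)) := by
    rw [hlamO_eq]
    have h1 := Associated.prod (Finset.univ) _ (fun (_ : (CyclotomicField n ℚ) ≃ₐ[K] (CyclotomicField n ℚ)) => (1 - hζ.toInteger))
      (fun σ _ => assocPR (hζ.map_of_injective σ.injective) hζ)
    rwa [Finset.prod_const, Finset.card_univ, hcardAut] at h1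
  have hP : Associated (p : 𝓞 (CyclotomicField n ℚ)) ((1 - hζ.toInteger) ^ (p * (p - 1))) := p_assoc p hp n hpn ζ hζ
  have hassoc : Associated (p : 𝓞 (CyclotomicField n ℚ)) (lamO ^ p) := by
    refine hP.trans ?_
    have h2 := (hPlam.symm).pow_pow (n := p)
    rwa [← pow_mul, show (p - 1) * p = p * (p - 1) by ring] at h2
  obtain ⟨u, hu⟩ := hassoc
  -- divisibilities in 𝓞 K
  have hdvd1 : (p : 𝓞 K) ∣ lam ^ p := by
    refine bridge K _ _ ((u : 𝓞 (CyclotomicField n ℚ)) : (CyclotomicField n ℚ)) (u : 𝓞 (CyclotomicField n ℚ)).isIntegral_coe ?_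
    calc algebraMap K (CyclotomicField n ℚ) (algebraMap (𝓞 K) K (p : 𝓞 K)) * ((u : 𝓞 (CyclotomicField n ℚ)) : (CyclotomicField n ℚ))
        = ((p : 𝓞 (CyclotomicField n ℚ)) : (CyclotomicField n ℚ)) * ((u : 𝓞 (CyclotomicField n ℚ)) : (CyclotomicField n ℚ)) := by push_cast; ring
      _ = (((p : 𝓞 (CyclotomicField n ℚ)) * u : 𝓞 (CyclotomicField n ℚ)) : (CyclotomicField n ℚ)) := by push_cast; ring
      _ = ((lamO ^ p : 𝓞 (CyclotomicField n ℚ)) : (CyclotomicField n ℚ)) := by rw [hu]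
      _ = algebraMap K (CyclotomicField n ℚ) (algebraMap (𝓞 K) K (lam ^ p)) := by push_cast; rfl
  have hdvd2 : lam ^ p ∣ (p : 𝓞 K) := by
    refine bridge K _ _ (((u⁻¹ : (𝓞 (CyclotomicField n ℚ))ˣ) : 𝓞 (CyclotomicField n ℚ)) : (CyclotomicField n ℚ)) ((u⁻¹ : (𝓞 (CyclotomicField n ℚ))ˣ) : 𝓞 (CyclotomicField n ℚ)).isIntegral_coe ?_
    have hu' : lamO ^ p * ((u⁻¹ : (𝓞 (CyclotomicField n ℚ))ˣ) : 𝓞 (CyclotomicField n ℚ)) = (p : 𝓞 (CyclotomicField n ℚ)) := by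
      rw [← hu, mul_assoc]
      simp
    calc algebraMap K (CyclotomicField n ℚ) (algebraMap (𝓞 K) K (lam ^ p)) * (((u⁻¹ : (𝓞 (CyclotomicField n ℚ))ˣ) : 𝓞 (CyclotomicField n ℚ)) : (CyclotomicField n ℚ))
        = ((lamO ^ p : 𝓞 (CyclotomicField n ℚ)) : (CyclotomicField n ℚ)) * (((u⁻¹ : (𝓞 (CyclotomicField n ℚ))ˣ) : 𝓞 (CyclotomicField n ℚ)) : (CyclotomicField n ℚ)) := by push_cast; rfl
      _ = ((lamO ^ p * ((u⁻¹ : (𝓞 (CyclotomicField n ℚ))ˣ) : 𝓞 (CyclotomicField n ℚ)) : 𝓞 (CyclotomicField n ℚ)) : (CyclotomicField n ℚ)) := by push_cast; ring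
      _ = ((p : 𝓞 (CyclotomicField n ℚ)) : (CyclotomicField n ℚ)) := by rw [hu']
      _ = algebraMap K (CyclotomicField n ℚ) (algebraMap (𝓞 K) K (p : 𝓞 K)) := by push_cast; ring
  rw [Ideal.span_singleton_pow, Ideal.span_singleton_eq_span_singleton]
  exact associated_of_dvd_dvd hdvd1 hdvd2

theorem stmt_4 (p : ℕ) (hp : p.Prime) (hodd : Odd p)
    (K : IntermediateField ℚ (CyclotomicField (p ^ 2) ℚ))
    (hdeg : Module.finrank ℚ K = p)
    (ζ : CyclotomicField (p ^ 2) ℚ)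
    (hζ : IsPrimitiveRoot ζ (p ^ 2))
    (lam : 𝓞 K)
    (hlam : algebraMap (𝓞 K) K lam = Algebra.norm K ((1 : CyclotomicField (p ^ 2) ℚ) - ζ)) :
    Ideal.span {(p : 𝓞 K)} = Ideal.span {lam} ^ p :=
  aux p hp ⟨p ^ 2, pow_pos hp.pos 2⟩ rfl K hdeg ζ hζ lam hlam
end

section
/- Under the same setup with p ∣ m, the set {m/p, m − θ(t), m − θ²(t), …, m − θ^{p-1}(t)} is a ℤ-basis of M_m = {α ∈ O_K : Tr_{K/ℚ}(α) ≡ 0 mod m}; in particular M_m is a free ℤ-module of rank p. -/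
open NumberField

theorem stmt_7 (p n u m : ℕ) (hp : p.Prime) (hodd : Odd p)
    (hu : 0 < u) (hn : n = p ^ 2 * u) (hm : 1 < m) (hpm : p ∣ m)
    (K : Type*) [Field K] [NumberField K]
    (hdeg : Module.finrank ℚ K = p)
    (θ : 𝓞 K ≃ₐ[ℤ] 𝓞 K) (t : 𝓞 K)
    (b : Module.Basis (Fin p) ℤ (𝓞 K)) (hb0 : b ⟨0, hp.pos⟩ = 1)
    (hb : ∀ i : Fin p, (i : ℕ) ≠ 0 → b i = (θ ^ (i : ℕ)) t)
    (htr1 : Algebra.trace ℤ (𝓞 K) 1 = p)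
    (htr : ∀ i : ℕ, Algebra.trace ℤ (𝓞 K) ((θ ^ i) t) = 0) :
    LinearIndependent ℤ
      (fun i : Fin p =>
        if (i : ℕ) = 0 then ((m / p : ℕ) : 𝓞 K) else (m : 𝓞 K) - (θ ^ (i : ℕ)) t) ∧
    Submodule.span ℤ
      (Set.range fun i : Fin p =>
        if (i : ℕ) = 0 then ((m / p : ℕ) : 𝓞 K) else (m : 𝓞 K) - (θ ^ (i : ℕ)) t) =
      Submodule.comap (Algebra.trace ℤ (𝓞 K)) (Ideal.span {(m : ℤ)} : Submodule ℤ ℤ) := by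
  obtain ⟨q, hq⟩ := hpm
  have hq' : (m / p : ℕ) = q := by subst hq; exact Nat.mul_div_cancel_left q hp.pos
  set i0 : Fin p := ⟨0, hp.pos⟩ with hi0
  set v : Fin p → 𝓞 K := fun i =>
    if (i : ℕ) = 0 then ((m / p : ℕ) : 𝓞 K) else (m : 𝓞 K) - (θ ^ (i : ℕ)) t with hv
  have hqpos : 0 < q := Nat.pos_of_ne_zero (by rintro rfl; simp at hq; omega)
  -- v 0
  have hv0 : v i0 = (q : ℤ) • b i0 := by
    rw [hb0]; simp [hv, hi0, hq']
  have hvi : ∀ i : Fin p, (i : ℕ) ≠ 0 → v i = (m : ℤ) • b i0 - b i := by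
    intro i hi
    simp [hv, hi, hb i hi, hb0]
  -- trace of basis elements
  have htrb : ∀ j : Fin p, Algebra.trace ℤ (𝓞 K) (b j) = if j = i0 then (p : ℤ) else 0 := by
    intro j
    by_cases h : j = i0
    · simp [h, hb0, htr1]
    · have hj : (j : ℕ) ≠ 0 := fun hc => h (Fin.ext hc)
      rw [if_neg h, hb j hj, htr]
  -- coordinates of v
  have hcoord : ∀ i j : Fin p, b.repr (v i) j =
      if (i : ℕ) = 0 then (if j = i0 then (q : ℤ) else 0)
      else (if j = i0 then (m : ℤ) else 0) - (if i = j then 1 else 0) := by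
    intro i j
    by_cases hi : (i : ℕ) = 0
    · have : i = i0 := Fin.ext hi
      rw [this, hv0, map_smul, Module.Basis.repr_self]
      simp [hi, hi0, Finsupp.single_apply, eq_comm]
    · rw [hvi i hi, map_sub, map_smul, Module.Basis.repr_self, Module.Basis.repr_self]
      simp [hi, Finsupp.single_apply, eq_comm]
  have hsub := Submodule.subset_span (R := ℤ) (s := Set.range v)
  constructor
  · rw [Fintype.linearIndependent_iff]
    intro g hg
    have h1 : ∀ j : Fin p, ∑ i : Fin p, g i * b.repr (v i) j = 0 := by
      intro j
      have := congrArg (fun x => (b.repr x) j) hg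
      simpa only [map_sum, map_smul, Finsupp.coe_finset_sum, Finset.sum_apply,
        Finsupp.smul_apply, smul_eq_mul, map_zero, Finsupp.coe_zero, Pi.zero_apply] using this
    have hne : ∀ j, j ≠ i0 → g j = 0 := by
      intro j hj
      have h := h1 j
      have hjj : (j : ℕ) ≠ 0 := fun hc => hj (Fin.ext hc)
      have heach : ∀ i ∈ Finset.univ, g i * b.repr (v i) j = if i = j then -g j else 0 := by
        intro i _
        rw [hcoord]
        by_cases hi : (i : ℕ) = 0
        · have hii : i = i0 := Fin.ext hi
          have : i ≠ j := by rw [hii]; exact fun hc => hj hc.symm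
          simp [hi, hj, this]
        · by_cases hij : i = j
          · subst hij; simp [hi, hj]
          · simp [hi, hj, hij]
      rw [Finset.sum_congr rfl heach, Finset.sum_ite_eq' Finset.univ j] at h
      simpa using h
    intro j
    by_cases hj : j = i0
    · subst hj
      have h := h1 i0
      have heach : ∀ i ∈ Finset.univ, g i * b.repr (v i) i0 = if i = i0 then g i0 * q else 0 := by
        intro i _
        rw [hcoord]
        by_cases hi : (i : ℕ) = 0
        · have hii : i = i0 := Fin.ext hi
          rw [if_pos hi]; simp [hii]
        · have : i ≠ i0 := fun hc => hi (by rw [hc])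
          simp [hi, this, hne i this]
      rw [Finset.sum_congr rfl heach, Finset.sum_ite_eq' Finset.univ i0] at h
      simp only [Finset.mem_univ, if_true] at h
      have hq0 : (q : ℤ) ≠ 0 := by exact_mod_cast hqpos.ne'
      exact mul_left_cancel₀ hq0 (by rw [mul_comm]; simpa using h)
    · exact hne j hj
  · apply le_antisymm
    · rw [Submodule.span_le]
      rintro x ⟨i, rfl⟩
      simp only [SetLike.mem_coe, Submodule.mem_comap]
      rw [Ideal.mem_span_singleton]
      by_cases hi : (i : ℕ) = 0
      · have hii : i = i0 := Fin.ext hi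
        rw [hii, hv0, map_smul, hb0, htr1]
        exact ⟨1, by push_cast [hq]; rw [smul_eq_mul]; ring⟩
      · rw [hvi i hi, map_sub, map_smul, hb0, htr1, hb i hi, htr]
        exact ⟨p, by rw [smul_eq_mul]; ring⟩
    · intro x hx
      rw [Submodule.mem_comap] at hx
      have hdvd : (m : ℤ) ∣ Algebra.trace ℤ (𝓞 K) x := Ideal.mem_span_singleton.1 hx
      have htrx : Algebra.trace ℤ (𝓞 K) x = b.repr x i0 * p := by
        conv_lhs => rw [← b.sum_repr x]
        rw [map_sum]
        have heach : ∀ j ∈ Finset.univ, Algebra.trace ℤ (𝓞 K) (b.repr x j • b j)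
            = if j = i0 then b.repr x i0 * p else 0 := by
          intro j _
          rw [map_smul, htrb, smul_eq_mul]
          by_cases hji : j = i0 <;> simp [hji]
        rw [Finset.sum_congr rfl heach, Finset.sum_ite_eq' Finset.univ i0]
        simp
      have hdvd0 : (q : ℤ) ∣ b.repr x i0 := by
        have hp0 : (p : ℤ) ≠ 0 := by exact_mod_cast hp.pos.ne'
        have : (p : ℤ) * q ∣ (p : ℤ) * b.repr x i0 := by
          rw [htrx] at hdvd
          obtain ⟨d, hd⟩ := hdvd
          exact ⟨d, by push_cast [hq] at hd ⊢; linarith⟩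
        exact (mul_dvd_mul_iff_left hp0).1 this
      obtain ⟨d, hd⟩ := hdvd0
      have hmem : ∀ j : Fin p, b.repr x j • b j ∈ Submodule.span ℤ (Set.range v) := by
        intro j
        by_cases hj : j = i0
        · subst hj
          have : b.repr x i0 • b i0 = d • v i0 := by
            rw [hd, hv0, smul_smul, mul_comm]
          rw [this]
          exact Submodule.smul_mem _ _ (hsub ⟨i0, rfl⟩)
        · have hj' : (j : ℕ) ≠ 0 := fun hc => hj (Fin.ext hc)
          have hbj : b j = (p : ℤ) • v i0 - v j := by
            rw [hvi j hj', hv0, smul_smul]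
            congr 1
            push_cast [hq]
            ring_nf
          rw [hbj]
          exact Submodule.smul_mem _ _ (Submodule.sub_mem _
            (Submodule.smul_mem _ _ (hsub ⟨i0, rfl⟩)) (hsub ⟨j, rfl⟩))
      have hx' : x = ∑ j : Fin p, b.repr x j • b j := (b.sum_repr x).symm
      rw [hx']
      exact Submodule.sum_mem _ fun j _ => hmem j
end

section
/- Under the same setup with p ∤ m, the set {m, m − θ(t), m − θ²(t), …, m − θ^{p-1}(t)} is a ℤ-basis of M_m = {α ∈ O_K : Tr_{K/ℚ}(α) ≡ 0 mod m}; in particular M_m is a free ℤ-module of rank p. -/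
open NumberField

theorem stmt_8 (p n u m : ℕ) (hp : p.Prime) (hodd : Odd p)
    (hu : 0 < u) (hn : n = p ^ 2 * u) (hm : 1 < m) (hpm : ¬ p ∣ m)
    (K : Type*) [Field K] [NumberField K]
    (hdeg : Module.finrank ℚ K = p)
    (θ : 𝓞 K ≃ₐ[ℤ] 𝓞 K) (t : 𝓞 K)
    (b : Module.Basis (Fin p) ℤ (𝓞 K)) (hb0 : b ⟨0, hp.pos⟩ = 1)
    (hb : ∀ i : Fin p, (i : ℕ) ≠ 0 → b i = (θ ^ (i : ℕ)) t)
    (htr1 : Algebra.trace ℤ (𝓞 K) 1 = p)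
    (htr : ∀ i : ℕ, Algebra.trace ℤ (𝓞 K) ((θ ^ i) t) = 0) :
    LinearIndependent ℤ
      (fun i : Fin p =>
        if (i : ℕ) = 0 then ((m : ℕ) : 𝓞 K) else (m : 𝓞 K) - (θ ^ (i : ℕ)) t) ∧
    Submodule.span ℤ
      (Set.range fun i : Fin p =>
        if (i : ℕ) = 0 then ((m : ℕ) : 𝓞 K) else (m : 𝓞 K) - (θ ^ (i : ℕ)) t) =
      Submodule.comap (Algebra.trace ℤ (𝓞 K)) (Ideal.span {(m : ℤ)} : Submodule ℤ ℤ) := by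
  set i0 : Fin p := ⟨0, hp.pos⟩ with hi0
  set v : Fin p → 𝓞 K := fun i =>
    if (i : ℕ) = 0 then ((m : ℕ) : 𝓞 K) else (m : 𝓞 K) - (θ ^ (i : ℕ)) t with hvdef
  have hmcast : ((m : ℕ) : 𝓞 K) = (m : ℤ) • (1 : 𝓞 K) := by simp
  have hi0eq : ∀ i : Fin p, (i : ℕ) = 0 → i = i0 := fun i h => Fin.ext h
  have hv : ∀ i : Fin p, v i = (m : ℤ) • b i0 - (if (i : ℕ) = 0 then 0 else b i) := by
    intro i
    by_cases h : (i : ℕ) = 0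
    · simp only [hvdef]
      rw [if_pos h, if_pos h, sub_zero, hb0]
      exact hmcast
    · simp only [hvdef]
      rw [if_neg h, if_neg h, hb i h, hb0, hmcast]
  have htrm : Algebra.trace ℤ (𝓞 K) ((m : ℕ) : 𝓞 K) = (m : ℤ) * p := by
    rw [hmcast, map_smul, htr1]; simp
  have htrv : ∀ i, Algebra.trace ℤ (𝓞 K) (v i) = (m : ℤ) * p := by
    intro i
    by_cases h : (i : ℕ) = 0
    · simp only [hvdef, h, if_pos]; exact htrm
    · simp only [hvdef, h, if_neg, if_false, map_sub, htr]
      rw [show ((m : 𝓞 K)) = ((m : ℕ) : 𝓞 K) from rfl, htrm]; ring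
  have hmne : (m : ℤ) ≠ 0 := by positivity
  have hmp : (m : ℤ) * p ≠ 0 := by
    have : (0:ℤ) < p := by exact_mod_cast hp.pos
    positivity
  constructor
  · rw [Fintype.linearIndependent_iff]
    intro g hg
    have hsum : ∑ i, g i = 0 := by
      have h1 := congrArg (Algebra.trace ℤ (𝓞 K)) hg
      rw [map_sum, map_zero] at h1
      simp only [map_smul, htrv, smul_eq_mul] at h1
      rw [← Finset.sum_mul] at h1
      exact (mul_eq_zero.mp h1).resolve_right hmp
    have expand : ∀ i, g i • v i =
        g i • ((m : ℤ) • b i0) - (if (i : ℕ) = 0 then 0 else g i) • b i := by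
      intro i
      rw [hv i]
      by_cases h : (i : ℕ) = 0 <;> simp [h, smul_sub]
    have key : ∑ i : Fin p, (if (i : ℕ) = 0 then 0 else g i) • b i = 0 := by
      have h2 : ∑ i : Fin p, g i • v i =
          (∑ i : Fin p, g i) • ((m : ℤ) • b i0) -
            ∑ i : Fin p, (if (i : ℕ) = 0 then 0 else g i) • b i := by
        rw [Finset.sum_congr rfl (fun i _ => expand i), Finset.sum_sub_distrib,
          ← Finset.sum_smul]
      rw [hg, hsum, zero_smul] at h2
      have := h2.symm
      rwa [zero_sub, neg_eq_zero] at this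
    have hc := Fintype.linearIndependent_iff.mp b.linearIndependent _ key
    have h3 : ∀ j : Fin p, (j : ℕ) ≠ 0 → g j = 0 := by
      intro j hj
      have := hc j
      simpa [hj] using this
    intro i
    by_cases h : (i : ℕ) = 0
    · rw [hi0eq i h]
      calc g i0 = ∑ j, g j := by
            refine (Finset.sum_eq_single i0 (fun j _ hj => ?_) (by simp)).symm
            exact h3 j (fun hc' => hj (hi0eq j hc'))
        _ = 0 := hsum
    · exact h3 i h
  · apply le_antisymm
    · rw [Submodule.span_le]
      rintro x ⟨i, rfl⟩
      simp only [SetLike.mem_coe, Submodule.mem_comap, Ideal.mem_span_singleton]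
      rw [htrv i]
      exact Dvd.intro _ rfl
    · intro x hx
      rw [Submodule.mem_comap] at hx
      have hdvd : (m : ℤ) ∣ Algebra.trace ℤ (𝓞 K) x := by
        rwa [← Ideal.mem_span_singleton]
      -- trace x = (b.repr x i0) * p
      have hxsum : ∑ i, b.repr x i • b i = x := b.sum_repr x
      have htrx : Algebra.trace ℤ (𝓞 K) x = b.repr x i0 * p := by
        conv_lhs => rw [← hxsum, map_sum]
        simp only [map_smul, smul_eq_mul]
        rw [Finset.sum_eq_single i0]
        · rw [hb0, htr1]
        · intro j _ hj
          have hj' : (j : ℕ) ≠ 0 := fun hc' => hj (hi0eq j hc')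
          rw [hb j hj', htr, mul_zero]
        · simp
      have hcop : IsCoprime (m : ℤ) (p : ℤ) :=
        Int.isCoprime_iff_gcd_eq_one.mpr (by
          simpa [Int.gcd] using (Nat.Coprime.symm (hp.coprime_iff_not_dvd.mpr hpm)))
      have hdvd0 : (m : ℤ) ∣ b.repr x i0 := by
        refine hcop.dvd_of_dvd_mul_right ?_
        rwa [← htrx]
      obtain ⟨k, hk⟩ := hdvd0
      rw [← hxsum]
      refine Submodule.sum_mem _ (fun i _ => ?_)
      by_cases h : (i : ℕ) = 0
      · rw [hi0eq i h, hb0, hk]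
        have hvi0 : v i0 = ((m : ℕ) : 𝓞 K) := by simp [hvdef, hi0]
        have : ((m : ℤ) * k) • (1 : 𝓞 K) = k • v i0 := by
          rw [hvi0, hmcast, smul_smul, mul_comm]
        rw [this]
        exact Submodule.smul_mem _ _ (Submodule.subset_span ⟨i0, rfl⟩)
      · have hbi : b i = v i0 - v i := by
          rw [hv i0, hv i]
          simp [h, hi0]
        rw [hbi]
        exact Submodule.smul_mem _ _ (Submodule.sub_mem _
          (Submodule.subset_span ⟨i0, rfl⟩) (Submodule.subset_span ⟨i, rfl⟩))
end

section
/- Let p be an odd prime, K a cyclic number field of degree p with conductor n in which p is ramified, u = n/p², and m a positive multiple of p. If α = a_0(m/p) + Σ_{i=1}^{p-1} a_i(m − θ^i(t)) with a_i ∈ ℤ, then Tr_{K/ℚ}(α²) = p[ (a_0 m/p + m Σ_{i=1}^{p-1} a_i)² + u( p Σ_{i=1}^{p-1} a_i² − (Σ_{i=1}^{p-1} a_i)² ) ]. -/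
open NumberField

theorem stmt_9 (p n u m : ℕ) (hp : p.Prime) (hodd : Odd p)
    (hu : 0 < u) (hn : n = p ^ 2 * u) (hm : 0 < m) (hpm : p ∣ m)
    (K : Type*) [Field K] [NumberField K]
    (hdeg : Module.finrank ℚ K = p)
    (θ : 𝓞 K ≃ₐ[ℤ] 𝓞 K) (t : 𝓞 K)
    (b : Module.Basis (Fin p) ℤ (𝓞 K)) (hb0 : b ⟨0, hp.pos⟩ = 1)
    (hb : ∀ i : Fin p, (i : ℕ) ≠ 0 → b i = (θ ^ (i : ℕ)) t)
    (htr1 : Algebra.trace ℤ (𝓞 K) 1 = p)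
    (htr : ∀ i : ℕ, Algebra.trace ℤ (𝓞 K) ((θ ^ i) t) = 0)
    (htr2 : ∀ i j : ℕ, Algebra.trace ℤ (𝓞 K) ((θ ^ i) t * (θ ^ j) t) =
      if i % p = j % p then (p * u * (p - 1) : ℤ) else -(p * u))
    (a : Fin p → ℤ) :
    Algebra.trace ℤ (𝓞 K)
      ((a ⟨0, hp.pos⟩ • ((m / p : ℕ) : 𝓞 K) +
        ∑ i ∈ Finset.univ.filter (fun i : Fin p => (i : ℕ) ≠ 0),
          a i • ((m : 𝓞 K) - (θ ^ (i : ℕ)) t)) ^ 2) =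
    (p : ℤ) *
      ((a ⟨0, hp.pos⟩ * ((m / p : ℕ) : ℤ) +
          (m : ℤ) * ∑ i ∈ Finset.univ.filter (fun i : Fin p => (i : ℕ) ≠ 0), a i) ^ 2 +
        (u : ℤ) *
          ((p : ℤ) * ∑ i ∈ Finset.univ.filter (fun i : Fin p => (i : ℕ) ≠ 0), (a i) ^ 2 -
            (∑ i ∈ Finset.univ.filter (fun i : Fin p => (i : ℕ) ≠ 0), a i) ^ 2)) := by
  classical
  set S := Finset.univ.filter (fun i : Fin p => (i : ℕ) ≠ 0) with hS
  set T := Algebra.trace ℤ (𝓞 K) with hT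
  set x : Fin p → 𝓞 K := fun i => (θ ^ (i : ℕ)) t with hx
  set c : ℤ := ((m / p : ℕ) : ℤ) with hc
  set z : ℤ := a ⟨0, hp.pos⟩ * c + m * ∑ i ∈ S, a i with hz
  set A : ℤ := (p : ℤ) * u * ((p : ℤ) - 1) with hA
  set B : ℤ := -((p : ℤ) * u) with hB
  -- rewrite argument as z • 1 + ∑ (-a i) • x i
  have harg : (a ⟨0, hp.pos⟩ • ((m / p : ℕ) : 𝓞 K) +
      ∑ i ∈ S, a i • ((m : 𝓞 K) - x i))
      = z • (1 : 𝓞 K) + ∑ i ∈ S, (-a i) • x i := by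
    have h1 : ((m / p : ℕ) : 𝓞 K) = c • (1 : 𝓞 K) := by
      rw [zsmul_eq_mul, mul_one, hc, Int.cast_natCast]
    have h2 : ∀ i : Fin p, a i • ((m : 𝓞 K) - x i)
        = (m * a i) • (1 : 𝓞 K) + (-a i) • x i := by
      intro i
      have h3 : (m : 𝓞 K) = ((m : ℤ)) • (1 : 𝓞 K) := by simp
      rw [h3, smul_sub, smul_smul, neg_smul]
      ring_nf
    rw [h1, smul_smul, Finset.sum_congr rfl (fun i _ => h2 i), Finset.sum_add_distrib,
      ← Finset.sum_smul, ← Finset.mul_sum, hz, add_smul, add_assoc]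
  rw [harg]
  have hsq : (z • (1 : 𝓞 K) + ∑ i ∈ S, (-a i) • x i) ^ 2
      = (z * z) • (1 : 𝓞 K) + ∑ i ∈ S, (2 * z * (-a i)) • x i
        + ∑ i ∈ S, ∑ j ∈ S, ((-a i) * (-a j)) • (x i * x j) := by
    rw [add_sq]
    congr 1
    congr 1
    · rw [sq, smul_mul_assoc, one_mul, smul_smul]
    · rw [Finset.mul_sum]
      apply Finset.sum_congr rfl
      intro i _
      simp only [zsmul_eq_mul]
      push_cast
      ring
    · rw [sq, Finset.sum_mul_sum]
      apply Finset.sum_congr rfl; intro i _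
      apply Finset.sum_congr rfl; intro j _
      rw [smul_mul_smul_comm]
  rw [hsq, map_add, map_add, map_smul, map_sum, map_sum]
  simp only [map_smul, map_sum, smul_eq_mul]
  have htrx : ∀ i : Fin p, T (x i) = 0 := fun i => htr (i : ℕ)
  have htr2' : ∀ i j : Fin p, T (x i * x j) = if i = j then A else B := by
    intro i j
    have := htr2 (i : ℕ) (j : ℕ)
    rw [Nat.mod_eq_of_lt i.isLt, Nat.mod_eq_of_lt j.isLt] at this
    simp only [Fin.val_eq_val] at this
    exact this
  have hdiag : ∑ i ∈ S, ∑ j ∈ S, (-a i * -a j) * T (x i * x j)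
      = B * (∑ i ∈ S, a i) ^ 2 + (A - B) * ∑ i ∈ S, (a i) ^ 2 := by
    have h1 : ∀ i ∈ S, ∑ j ∈ S, (-a i * -a j) * T (x i * x j)
        = B * (a i * ∑ j ∈ S, a j) + (A - B) * a i ^ 2 := by
      intro i hi
      have : ∀ j ∈ S, (-a i * -a j) * T (x i * x j)
          = B * (a i * a j) + (if i = j then a i * a j * (A - B) else 0) := by
        intro j _
        rw [htr2' i j]
        split_ifs with h
        · subst h; ring
        · ring
      rw [Finset.sum_congr rfl this, Finset.sum_add_distrib, Finset.sum_ite_eq S i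
        (fun j => a i * a j * (A - B)), if_pos hi, ← Finset.mul_sum, ← Finset.mul_sum]
      ring
    rw [Finset.sum_congr rfl h1, Finset.sum_add_distrib, ← Finset.mul_sum, ← Finset.mul_sum,
      ← Finset.sum_mul]
    ring
  simp only [htrx, htr1, htr2', mul_zero, Finset.sum_const_zero, add_zero]
  have := hdiag
  simp only [htr2'] at this
  rw [this, hz, hA, hB]
  ring
end

section
/- Let p be an odd prime, K a cyclic number field of degree p with conductor n = p²u, p ramified, and m a positive multiple of p. For the module M_m = {α ∈ O_K : Tr_{K/ℚ}(α) ≡ 0 mod m}, the minimum of Tr_{K/ℚ}(α²) over nonzero α ∈ M_m equals min{ m²/p, u p (p−1) }. -/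
open NumberField

private lemma aux_cs {ι : Type*} (S : Finset ι) (c : ι → ℤ) (p : ℕ) (hS : S.card ≤ p) :
    (∑ i ∈ S, c i) ^ 2 ≤ (p : ℤ) * ∑ i ∈ S, (c i) ^ 2 := by
  calc (∑ i ∈ S, c i) ^ 2 ≤ (S.card : ℤ) * ∑ i ∈ S, (c i) ^ 2 := sq_sum_le_card_mul_sum_sq
    _ ≤ (p : ℤ) * ∑ i ∈ S, (c i) ^ 2 := by
        apply mul_le_mul_of_nonneg_right (by exact_mod_cast hS)
        positivity

private lemma aux_one_le_sq (a : ℤ) (ha : a ≠ 0) : 1 ≤ a ^ 2 := by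
  have := Int.one_le_abs (by simpa using ha)
  nlinarith [sq_abs a]

private lemma aux_ineq {ι : Type*} [DecidableEq ι] (S : Finset ι) (c : ι → ℤ) (p : ℕ)
    (hS : S.card + 1 ≤ p) (k : ι) (hk : k ∈ S) (hck : c k ≠ 0) :
    (p : ℤ) - 1 ≤ (p : ℤ) * (∑ i ∈ S, (c i) ^ 2) - (∑ i ∈ S, c i) ^ 2 := by
  classical
  set S' := S.filter (fun i => c i ≠ 0) with hS'def
  have hA : ∑ i ∈ S, c i = ∑ i ∈ S', c i := by
    rw [hS'def, Finset.sum_filter_of_ne (fun x _ h => h)]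
  have hQ : ∑ i ∈ S, (c i) ^ 2 = ∑ i ∈ S', (c i) ^ 2 := by
    rw [hS'def, Finset.sum_filter_of_ne]
    intro x _ h hc
    exact h (by simp [hc])
  have hN1 : 1 ≤ S'.card :=
    Finset.card_pos.mpr ⟨k, Finset.mem_filter.mpr ⟨hk, hck⟩⟩
  have hN2 : S'.card + 1 ≤ p := by
    have h := Finset.card_filter_le S (fun i => c i ≠ 0)
    rw [← hS'def] at h
    omega
  have hCS : (∑ i ∈ S', c i) ^ 2 ≤ (S'.card : ℤ) * ∑ i ∈ S', (c i) ^ 2 :=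
    sq_sum_le_card_mul_sum_sq
  have hQN : (S'.card : ℤ) ≤ ∑ i ∈ S', (c i) ^ 2 := by
    have := Finset.card_nsmul_le_sum S' (fun i => (c i) ^ 2) 1
      (fun i hi => aux_one_le_sq _ (Finset.mem_filter.mp hi).2)
    simpa using this
  rw [hA, hQ]
  have hN1' : (1 : ℤ) ≤ (S'.card : ℤ) := by exact_mod_cast hN1
  have hN2' : (S'.card : ℤ) + 1 ≤ (p : ℤ) := by exact_mod_cast hN2
  nlinarith [hCS, hQN, mul_nonneg (sub_nonneg.mpr hN1') (sub_nonneg.mpr (by linarith [hN2'] : (S'.card : ℤ) ≤ (p:ℤ) - 1))]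

theorem stmt_11 (p n u m : ℕ) (hp : p.Prime) (hodd : Odd p)
    (hu : 0 < u) (hn : n = p ^ 2 * u) (hm : 0 < m) (hpm : p ∣ m)
    (K : Type*) [Field K] [NumberField K]
    (hdeg : Module.finrank ℚ K = p)
    (θ : 𝓞 K ≃ₐ[ℤ] 𝓞 K) (t : 𝓞 K)
    (b : Module.Basis (Fin p) ℤ (𝓞 K)) (hb0 : b ⟨0, hp.pos⟩ = 1)
    (hb : ∀ i : Fin p, (i : ℕ) ≠ 0 → b i = (θ ^ (i : ℕ)) t)
    (htr1 : Algebra.trace ℤ (𝓞 K) 1 = p)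
    (htr : ∀ i : ℕ, Algebra.trace ℤ (𝓞 K) ((θ ^ i) t) = 0)
    (htr2 : ∀ i j : ℕ, Algebra.trace ℤ (𝓞 K) ((θ ^ i) t * (θ ^ j) t) =
      if i % p = j % p then (p * u * (p - 1) : ℤ) else -(p * u)) :
    IsLeast
      {x : ℤ | ∃ α : 𝓞 K,
        α ∈ Submodule.comap (Algebra.trace ℤ (𝓞 K)) (Ideal.span {(m : ℤ)} : Submodule ℤ ℤ) ∧
        α ≠ 0 ∧ x = Algebra.trace ℤ (𝓞 K) (α ^ 2)}
      (↑(min (m ^ 2 / p) (u * p * (p - 1)))) := by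
  classical
  obtain ⟨M, hM⟩ := hpm
  have hp2 : p ≠ 2 := by rintro rfl; simp [Nat.odd_iff] at hodd
  have hp3 : 3 ≤ p := by have := hp.two_le; omega
  have hM0 : 0 < M := by
    rcases Nat.eq_zero_or_pos M with h | h
    · subst h; omega
    · exact h
  set z : Fin p := ⟨0, hp.pos⟩ with hzdef
  set S : Finset (Fin p) := Finset.univ.erase z with hSdef
  have hScard : S.card = p - 1 := by
    rw [hSdef, Finset.card_erase_of_mem (Finset.mem_univ z)]
    simp
  have hmemS : ∀ i : Fin p, i ≠ z → i ∈ S := fun i hi =>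
    Finset.mem_erase.mpr ⟨hi, Finset.mem_univ i⟩
  have hne_z : ∀ i : Fin p, i ≠ z ↔ (i : ℕ) ≠ 0 := by
    intro i
    constructor
    · intro h hc; exact h (by rw [hzdef]; exact Fin.ext hc)
    · intro h hc; exact h (by rw [hc])
  -- trace of basis elements
  have htrb : ∀ i : Fin p, Algebra.trace ℤ (𝓞 K) (b i) = if i = z then (p : ℤ) else 0 := by
    intro i
    by_cases h : i = z
    · rw [if_pos h, h, hzdef, hb0, htr1]
    · rw [if_neg h, hb i ((hne_z i).mp h), htr]
  -- trace of products of basis elements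
  have hE : ∀ i j : Fin p, Algebra.trace ℤ (𝓞 K) (b i * b j) =
      if i = z then (if j = z then (p : ℤ) else 0)
      else if j = z then 0
      else (if i = j then (p : ℤ) * u * ((p : ℤ) - 1) else -((p : ℤ) * u)) := by
    intro i j
    by_cases hi : i = z
    · rw [if_pos hi, hi, hzdef, hb0, one_mul]
      by_cases hj : j = z
      · rw [if_pos hj, hj, hzdef, hb0, htr1]
      · rw [if_neg hj, hb j ((hne_z j).mp hj), htr]
    · rw [if_neg hi]
      by_cases hj : j = z
      · rw [if_pos hj, hj, hzdef, hb0, mul_one, hb i ((hne_z i).mp hi), htr]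
      · rw [if_neg hj, hb i ((hne_z i).mp hi), hb j ((hne_z j).mp hj), htr2]
        have hmod : ((i : ℕ) % p = (j : ℕ) % p) ↔ i = j := by
          rw [Nat.mod_eq_of_lt i.isLt, Nat.mod_eq_of_lt j.isLt]
          exact ⟨fun h => Fin.ext h, fun h => by rw [h]⟩
        by_cases hij : i = j
        · rw [if_pos (hmod.mpr hij), if_pos hij]
        · rw [if_neg (fun h => hij (hmod.mp h)), if_neg hij]
  -- key expansion of trace of α² in terms of coordinates
  have hkey : ∀ α : 𝓞 K,
      Algebra.trace ℤ (𝓞 K) α = (p : ℤ) * b.repr α z ∧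
      Algebra.trace ℤ (𝓞 K) (α ^ 2)
        = (p : ℤ) * (b.repr α z) ^ 2
          + (p : ℤ) * u * ((p : ℤ) * (∑ i ∈ S, (b.repr α i) ^ 2) - (∑ i ∈ S, b.repr α i) ^ 2) := by
    intro α
    set c : Fin p → ℤ := fun i => b.repr α i with hcdef
    have hαsum : α = ∑ i, c i • b i := (b.sum_repr α).symm
    have hsplit : ∀ f : Fin p → ℤ, ∑ i, f i = f z + ∑ i ∈ S, f i := fun f =>
      (Finset.add_sum_erase Finset.univ f (Finset.mem_univ z)).symm
    constructor
    · conv_lhs => rw [hαsum]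
      rw [map_sum]
      simp only [map_smul, smul_eq_mul, htrb]
      rw [Finset.sum_eq_single z (fun i _ hi => by rw [if_neg hi, mul_zero]) (fun h => absurd (Finset.mem_univ z) h)]
      rw [if_pos rfl]; ring
    · have hexp : Algebra.trace ℤ (𝓞 K) (α ^ 2)
          = ∑ i, ∑ j, c i * c j * Algebra.trace ℤ (𝓞 K) (b i * b j) := by
        conv_lhs => rw [sq, hαsum]
        rw [Finset.sum_mul_sum, map_sum]
        refine Finset.sum_congr rfl fun i _ => ?_
        rw [map_sum]
        refine Finset.sum_congr rfl fun j _ => ?_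
        rw [smul_mul_smul_comm, map_smul, smul_eq_mul]
      have hEzz : Algebra.trace ℤ (𝓞 K) (b z * b z) = (p : ℤ) := by
        rw [hE, if_pos rfl, if_pos rfl]
      have hEzS : ∀ j ∈ S, Algebra.trace ℤ (𝓞 K) (b z * b j) = 0 := fun j hj => by
        rw [hE, if_pos rfl, if_neg (Finset.ne_of_mem_erase hj)]
      have hESz : ∀ i ∈ S, Algebra.trace ℤ (𝓞 K) (b i * b z) = 0 := fun i hi => by
        rw [hE, if_neg (Finset.ne_of_mem_erase hi), if_pos rfl]
      have hESS : ∀ i ∈ S, ∀ j ∈ S, Algebra.trace ℤ (𝓞 K) (b i * b j)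
          = (if i = j then (p : ℤ) * u * ((p : ℤ) - 1) else -((p : ℤ) * u)) := by
        intro i hi j hj
        rw [hE, if_neg (Finset.ne_of_mem_erase hi), if_neg (Finset.ne_of_mem_erase hj)]
      have piece1 : ∑ j, c z * c j * Algebra.trace ℤ (𝓞 K) (b z * b j) = (p : ℤ) * (c z) ^ 2 := by
        rw [hsplit, hEzz, Finset.sum_eq_zero (fun j hj => by rw [hEzS j hj, mul_zero])]
        ring
      have piece2 : ∀ i ∈ S, (∑ j, c i * c j * Algebra.trace ℤ (𝓞 K) (b i * b j))
          = ∑ j ∈ S, c i * c j * (if i = j then (p : ℤ) * u * ((p : ℤ) - 1) else -((p : ℤ) * u)) := by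
        intro i hi
        rw [hsplit, hESz i hi, mul_zero, zero_add]
        exact Finset.sum_congr rfl fun j hj => by rw [hESS i hi j hj]
      have h3 : ∀ i ∈ S, (∑ j ∈ S, c i * c j * (if i = j then (p : ℤ) * u * ((p : ℤ) - 1) else -((p : ℤ) * u)))
          = (p : ℤ) * u * (p : ℤ) * (c i) ^ 2 + (-((p : ℤ) * u)) * (c i * ∑ j ∈ S, c j) := by
        intro i hi
        have hterm : ∀ j : Fin p, c i * c j * (if i = j then (p : ℤ) * u * ((p : ℤ) - 1) else -((p : ℤ) * u))
            = (if i = j then (p : ℤ) * u * (p : ℤ) * (c i * c j) else 0) + (-((p : ℤ) * u)) * (c i * c j) := by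
          intro j; split <;> ring
        calc (∑ j ∈ S, c i * c j * (if i = j then (p : ℤ) * u * ((p : ℤ) - 1) else -((p : ℤ) * u)))
            = ∑ j ∈ S, ((if i = j then (p : ℤ) * u * (p : ℤ) * (c i * c j) else 0)
                + (-((p : ℤ) * u)) * (c i * c j)) :=
              Finset.sum_congr rfl fun j _ => hterm j
          _ = (p : ℤ) * u * (p : ℤ) * (c i) ^ 2 + (-((p : ℤ) * u)) * (c i * ∑ j ∈ S, c j) := by
              rw [Finset.sum_add_distrib,
                Finset.sum_ite_eq S i (fun j => (p : ℤ) * u * (p : ℤ) * (c i * c j)), if_pos hi,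
                ← Finset.mul_sum, ← Finset.mul_sum]
              ring
      rw [hexp, hsplit, piece1, Finset.sum_congr rfl piece2, Finset.sum_congr rfl h3,
        Finset.sum_add_distrib, ← Finset.mul_sum, ← Finset.mul_sum, ← Finset.sum_mul]
      ring
  constructor
  · -- membership: the minimum is attained
    rcases le_total (m ^ 2 / p) (u * p * (p - 1)) with h | h
    · -- attained by M • 1
      rw [min_eq_left h]
      refine ⟨(M : ℤ) • (1 : 𝓞 K), ?_, ?_, ?_⟩
      · rw [Submodule.mem_comap, map_smul, htr1, smul_eq_mul, Ideal.mem_span_singleton]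
        refine ⟨1, ?_⟩
        push_cast [hM]
        ring
      · intro h0
        have := congrArg (Algebra.trace ℤ (𝓞 K)) h0
        rw [map_smul, htr1, map_zero, smul_eq_mul] at this
        have : (M : ℤ) * p = 0 := this
        have hp0 : (p : ℤ) ≠ 0 := by exact_mod_cast hp.pos.ne'
        have hM0' : (M : ℤ) ≠ 0 := by exact_mod_cast hM0.ne'
        exact (mul_ne_zero hM0' hp0) this
      · rw [smul_pow, one_pow, map_smul, htr1, smul_eq_mul]
        have hdiv : m ^ 2 / p = p * M ^ 2 := by
          rw [hM, show (p * M) ^ 2 = p * (p * M ^ 2) by ring,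
            Nat.mul_div_cancel_left _ hp.pos]
        rw [hdiv]
        push_cast
        ring
    · -- attained by θ t
      rw [min_eq_right h]
      have hc1 : ((p - 1 : ℕ) : ℤ) = (p : ℤ) - 1 := by omega
      have htt : Algebra.trace ℤ (𝓞 K) ((θ ^ (1 : ℕ)) t * (θ ^ (1 : ℕ)) t)
          = (p : ℤ) * u * ((p : ℤ) - 1) := by
        rw [htr2 1 1, if_pos rfl]
      have hval : ((u * p * (p - 1) : ℕ) : ℤ) = (p : ℤ) * u * ((p : ℤ) - 1) := by
        rw [Nat.cast_mul, Nat.cast_mul, hc1]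
        ring
      refine ⟨(θ ^ (1 : ℕ)) t, ?_, ?_, ?_⟩
      · rw [Submodule.mem_comap, htr]
        exact Submodule.zero_mem _
      · intro h0
        have := htt
        rw [h0, mul_zero, map_zero] at this
        have hp' : (3 : ℤ) ≤ (p : ℤ) := by exact_mod_cast hp3
        have hu' : (1 : ℤ) ≤ (u : ℤ) := by exact_mod_cast hu
        nlinarith [this]
      · rw [sq, htt, hval]
  · -- lower bound
    rintro x ⟨α, hmem, hα, rfl⟩
    obtain ⟨htrα, hkα⟩ := hkey α
    set c : Fin p → ℤ := fun i => b.repr α i with hcdef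
    rw [Submodule.mem_comap, Ideal.mem_span_singleton, htrα] at hmem
    have hdvd : (M : ℤ) ∣ c z := by
      have hmz : ((m : ℕ) : ℤ) = (p : ℤ) * (M : ℤ) := by push_cast [hM]; ring
      rw [hmz] at hmem
      have hp0 : (p : ℤ) ≠ 0 := by exact_mod_cast hp.pos.ne'
      obtain ⟨d, hd⟩ := hmem
      exact ⟨d, by
        have : (p : ℤ) * c z = (p : ℤ) * ((M : ℤ) * d) := by rw [hd]; ring
        exact mul_left_cancel₀ hp0 this⟩
    have hQ0 : (0 : ℤ) ≤ ∑ i ∈ S, (c i) ^ 2 := Finset.sum_nonneg fun i _ => sq_nonneg _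
    have hCS : (∑ i ∈ S, c i) ^ 2 ≤ (p : ℤ) * ∑ i ∈ S, (c i) ^ 2 :=
      aux_cs S c p (by omega)
    have hpu0 : (0 : ℤ) ≤ (p : ℤ) * u := by positivity
    have hcast : ((min (m ^ 2 / p) (u * p * (p - 1)) : ℕ) : ℤ)
        = min ((p : ℤ) * (M : ℤ) ^ 2) ((p : ℤ) * u * ((p : ℤ) - 1)) := by
      have hdiv : m ^ 2 / p = p * M ^ 2 := by
        rw [hM, show (p * M) ^ 2 = p * (p * M ^ 2) by ring,
          Nat.mul_div_cancel_left _ hp.pos]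
      have hc1 : ((p - 1 : ℕ) : ℤ) = (p : ℤ) - 1 := by omega
      rw [hdiv, Nat.cast_min]
      congr 1
      all_goals push_cast [hc1]
      all_goals ring
    rw [hcast, hkα]
    by_cases hz : c z = 0
    · -- α has trace 0 part: use the combinatorial inequality
      have hex : ∃ k : Fin p, c k ≠ 0 := by
        by_contra hno
        push_neg at hno
        exact hα (b.repr.map_eq_zero_iff.mp (Finsupp.ext fun i => by simpa using hno i))
      obtain ⟨k, hk⟩ := hex
      have hkz : k ≠ z := fun h => hk (h ▸ hz)
      have hineq : (p : ℤ) - 1 ≤ (p : ℤ) * (∑ i ∈ S, (c i) ^ 2) - (∑ i ∈ S, c i) ^ 2 :=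
        aux_ineq S c p (by omega) k (hmemS k hkz) hk
      have h2 : (p : ℤ) * u * ((p : ℤ) - 1)
          ≤ (p : ℤ) * u * ((p : ℤ) * (∑ i ∈ S, (c i) ^ 2) - (∑ i ∈ S, c i) ^ 2) :=
        mul_le_mul_of_nonneg_left hineq hpu0
      calc min ((p : ℤ) * (M : ℤ) ^ 2) ((p : ℤ) * u * ((p : ℤ) - 1))
          ≤ (p : ℤ) * u * ((p : ℤ) - 1) := min_le_right _ _
        _ ≤ (p : ℤ) * (c z) ^ 2 + (p : ℤ) * u * ((p : ℤ) * (∑ i ∈ S, (c i) ^ 2) - (∑ i ∈ S, c i) ^ 2) := by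
            rw [hz]
            simpa using h2
    · -- trace part is nonzero, so it dominates
      have habs : (M : ℤ) ≤ |c z| :=
        Int.le_of_dvd (abs_pos.mpr hz) ((dvd_abs _ _).mpr hdvd)
      have hsq : (M : ℤ) ^ 2 ≤ (c z) ^ 2 := by
        have := pow_le_pow_left₀ (by positivity : (0:ℤ) ≤ (M:ℤ)) habs 2
        rwa [sq_abs] at this
      have h2 : (0 : ℤ) ≤ (p : ℤ) * u * ((p : ℤ) * (∑ i ∈ S, (c i) ^ 2) - (∑ i ∈ S, c i) ^ 2) :=
        mul_nonneg hpu0 (by linarith)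
      calc min ((p : ℤ) * (M : ℤ) ^ 2) ((p : ℤ) * u * ((p : ℤ) - 1))
          ≤ (p : ℤ) * (M : ℤ) ^ 2 := min_le_left _ _
        _ ≤ (p : ℤ) * (c z) ^ 2 := by
            have hp0 : (0 : ℤ) ≤ (p : ℤ) := by positivity
            exact mul_le_mul_of_nonneg_left hsq hp0
        _ ≤ _ := by linarith
end

section
/- Let p be an odd prime, K a cyclic number field of degree p with conductor n = p²u, p ramified, and m > 1 an integer. If α = a_0(m − t) + a_1(m − θ(t)) + ⋯ + a_{p-1}(m − θ^{p-1}(t)) with a_i ∈ ℤ, then Tr_{K/ℚ}(α²) = p[ u p Σ_{i=0}^{p-1} a_i² + (m² − u)(Σ_{i=0}^{p-1} a_i)² ]. -/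
open NumberField

theorem stmt_12 (p n u m : ℕ) (hp : p.Prime) (hodd : Odd p)
    (hu : 0 < u) (hn : n = p ^ 2 * u) (hm : 1 < m)
    (K : Type*) [Field K] [NumberField K]
    (hdeg : Module.finrank ℚ K = p)
    (θ : 𝓞 K ≃ₐ[ℤ] 𝓞 K) (t : 𝓞 K)
    (b : Module.Basis (Fin p) ℤ (𝓞 K)) (hb0 : b ⟨0, hp.pos⟩ = 1)
    (hb : ∀ i : Fin p, (i : ℕ) ≠ 0 → b i = (θ ^ (i : ℕ)) t)
    (htr1 : Algebra.trace ℤ (𝓞 K) 1 = p)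
    (htr : ∀ i : ℕ, Algebra.trace ℤ (𝓞 K) ((θ ^ i) t) = 0)
    (htr2 : ∀ i j : ℕ, Algebra.trace ℤ (𝓞 K) ((θ ^ i) t * (θ ^ j) t) =
      if i % p = j % p then (p * u * (p - 1) : ℤ) else -(p * u))
    (a : Fin p → ℤ) :
    Algebra.trace ℤ (𝓞 K)
      ((∑ i : Fin p, a i • ((m : 𝓞 K) - (θ ^ (i : ℕ)) t)) ^ 2) =
    (p : ℤ) *
      ((u : ℤ) * (p : ℤ) * ∑ i : Fin p, (a i) ^ 2 +
        ((m : ℤ) ^ 2 - (u : ℤ)) * (∑ i : Fin p, a i) ^ 2) := by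
  have expand : (∑ i : Fin p, a i • ((m : 𝓞 K) - (θ ^ (i : ℕ)) t)) ^ 2 =
      ∑ i : Fin p, ∑ j : Fin p,
        (a i * a j) • (((m : 𝓞 K) - (θ ^ (i : ℕ)) t) * ((m : 𝓞 K) - (θ ^ (j : ℕ)) t)) := by
    rw [sq, Finset.sum_mul_sum]
    refine Finset.sum_congr rfl fun i _ => Finset.sum_congr rfl fun j _ => ?_
    rw [smul_mul_smul_comm]
  have key : ∀ i j : Fin p,
      Algebra.trace ℤ (𝓞 K) (((m : 𝓞 K) - (θ ^ (i : ℕ)) t) * ((m : 𝓞 K) - (θ ^ (j : ℕ)) t)) =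
      (m : ℤ) ^ 2 * p + (if i = j then ((p : ℤ) * u * (p - 1)) else -((p : ℤ) * u)) := by
    intro i j
    have h1 : ((m : 𝓞 K) - (θ ^ (i : ℕ)) t) * ((m : 𝓞 K) - (θ ^ (j : ℕ)) t)
        = ((m : ℤ) ^ 2) • (1 : 𝓞 K) - (m : ℤ) • (θ ^ (j : ℕ)) t - (m : ℤ) • (θ ^ (i : ℕ)) t
          + (θ ^ (i : ℕ)) t * (θ ^ (j : ℕ)) t := by
      simp only [zsmul_eq_mul]
      push_cast
      ring
    rw [h1, map_add, map_sub, map_sub, map_smul, map_smul, map_smul, htr1,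
      htr (i : ℕ), htr (j : ℕ), htr2]
    have hij : (i : ℕ) % p = (j : ℕ) % p ↔ i = j := by
      rw [Nat.mod_eq_of_lt i.isLt, Nat.mod_eq_of_lt j.isLt, Fin.ext_iff]
    simp only [smul_eq_mul, mul_zero]
    rcases eq_or_ne i j with h | h
    · simp [hij, h]
    · simp [hij, h]
  rw [expand, map_sum]
  simp only [map_sum, map_smul, key, smul_eq_mul]
  have step : ∀ i j : Fin p,
      a i * a j * ((m : ℤ) ^ 2 * p + (if i = j then ((p : ℤ) * u * (p - 1)) else -((p : ℤ) * u)))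
      = a i * a j * ((m : ℤ) ^ 2 * p - p * u)
        + (if i = j then ((p : ℤ) ^ 2 * u * (a i * a j)) else 0) := by
    intro i j
    split <;> ring
  simp only [step, Finset.sum_add_distrib]
  have h1 : ∀ x : Fin p, ∑ y : Fin p, a x * a y * ((m : ℤ) ^ 2 * p - p * u)
      = a x * ((∑ y : Fin p, a y) * ((m : ℤ) ^ 2 * p - p * u)) := by
    intro x
    rw [← Finset.sum_mul, ← Finset.mul_sum, mul_assoc]
  have h2 : ∀ x : Fin p, (∑ y : Fin p, if x = y then ((p : ℤ) ^ 2 * u * (a x * a y)) else 0)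
      = (p : ℤ) ^ 2 * u * a x ^ 2 := by
    intro x
    simp [sq]
  rw [Finset.sum_congr rfl (fun x _ => h1 x), Finset.sum_congr rfl (fun x _ => h2 x),
    ← Finset.sum_mul, ← Finset.mul_sum]
  ring
end

section
/- Let p be an odd prime, K a cyclic number field of degree p with Gal(K/ℚ) = ⟨θ⟩, σ the canonical embedding into ℝ^p, and M ⊆ O_K a full-rank ℤ-module with θ(M) ⊆ M. Suppose α ∈ M \ ℤ is such that σ(α) is a shortest nonzero vector of the lattice Λ = σ(M). Then Tr_{K/ℚ}(α) ≠ 0 if and only if {σ(α), σ(θ(α)), …, σ(θ^{p-1}(α))} generates a well-rounded full-rank sublattice of Λ. -/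
open NumberField

theorem stmt_17 (p : ℕ) (hp : p.Prime) (hodd : Odd p)
    (K : Type*) [Field K] [NumberField K]
    (hdeg : Module.finrank ℚ K = p)
    (θ : K ≃ₐ[ℚ] K) (hgen : ∀ g : K ≃ₐ[ℚ] K, g ∈ Subgroup.zpowers θ)
    (ρ : K →+* ℝ)
    (σ : K → EuclideanSpace ℝ (Fin p))
    (hσ : ∀ x : K, σ x = fun j : Fin p => ρ ((θ ^ (j : ℕ)) x))
    (M : Submodule ℤ K)
    (hMint : ∀ x ∈ M, IsIntegral ℤ x)
    (bM : Module.Basis (Fin p) ℤ M)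
    (hθM : ∀ x ∈ M, θ x ∈ M)
    (α : K) (hαM : α ∈ M) (hα0 : α ≠ 0)
    (hα : α ∉ Set.range (Int.cast : ℤ → K))
    (hshort : ∀ x ∈ M, x ≠ 0 → ‖σ α‖ ≤ ‖σ x‖) :
    Algebra.trace ℚ K α ≠ 0 ↔
      (LinearIndependent ℝ (fun i : Fin p => σ ((θ ^ (i : ℕ)) α)) ∧
        ∀ v ∈ Submodule.span ℤ (Set.range fun i : Fin p => σ ((θ ^ (i : ℕ)) α)),
          v ≠ 0 → ‖σ α‖ ≤ ‖v‖) := by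
  classical
  haveI : Fact p.Prime := ⟨hp⟩
  haveI : NeZero p := ⟨hp.ne_zero⟩
  have hppos : 0 < p := hp.pos
  have hp2 : 2 ≤ p := hp.two_le
  have h01 : (0 : Fin p) ≠ 1 := by
    intro h
    have := Fin.one_eq_zero_iff.mp h.symm
    omega
  set β : Fin p → K := fun i => (θ ^ (i : ℕ)) α with hβdef
  -- powers of θ preserve M
  have hpowM : ∀ (n : ℕ), ∀ x ∈ M, (θ ^ n) x ∈ M := by
    intro n
    induction n with
    | zero => intro x hx; simpa using hx
    | succ n ih =>
      intro x hx
      rw [pow_succ, AlgEquiv.mul_apply]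
      exact ih _ (hθM _ hx)
  have hβM : ∀ i : Fin p, β i ∈ M := fun i => hpowM _ _ hαM
  -- σ as an additive hom
  have hσadd : ∀ x y : K, σ (x + y) = σ x + σ y := by
    intro x y
    ext j
    simp [hσ, map_add]
  set F : K →+ EuclideanSpace ℝ (Fin p) := AddMonoidHom.mk' σ hσadd with hF
  have hρinj : Function.Injective ρ := ρ.injective
  have hσinj : ∀ x : K, σ x = 0 → x = 0 := by
    intro x hx
    have h0 : σ x ⟨0, hppos⟩ = 0 := by rw [hx]; rfl
    rw [hσ] at h0
    simp only [pow_zero, AlgEquiv.one_apply] at h0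
    exact hρinj (by rwa [map_zero])
  -- the second conjunct always holds
  have hmin : ∀ v ∈ Submodule.span ℤ (Set.range fun i : Fin p => σ (β i)),
      v ≠ 0 → ‖σ α‖ ≤ ‖v‖ := by
    intro v hv hv0
    have hrange : (Set.range fun i : Fin p => σ (β i)) = ⇑F.toIntLinearMap '' Set.range β := by
      ext x
      constructor
      · rintro ⟨i, rfl⟩; exact ⟨β i, ⟨i, rfl⟩, rfl⟩
      · rintro ⟨y, ⟨i, rfl⟩, rfl⟩; exact ⟨i, rfl⟩
    rw [hrange, Submodule.span_image] at hv
    obtain ⟨m, hm, rfl⟩ := hv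
    have hmM : m ∈ M := by
      have : Submodule.span ℤ (Set.range β) ≤ M :=
        Submodule.span_le.mpr (by rintro x ⟨i, rfl⟩; exact hβM i)
      exact this hm
    have hm0 : m ≠ 0 := by
      rintro rfl
      exact hv0 (by simp)
    exact hshort m hmM hm0
  -- group theory: θ ≠ 1
  have hθ1 : θ ≠ 1 := by
    intro h1
    have hσc : ∀ x : K, ∀ j : Fin p, σ x j = ρ x := by
      intro x j; rw [hσ]; simp [h1]
    have hnorm : ∀ x : K, ‖σ x‖ = Real.sqrt p * |ρ x| := by
      intro x
      rw [EuclideanSpace.norm_eq]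
      have : ∀ j : Fin p, ‖σ x j‖ ^ 2 = |ρ x| ^ 2 := by
        intro j; rw [hσc x j, Real.norm_eq_abs]
      rw [Finset.sum_congr rfl fun j _ => this j, Finset.sum_const, Finset.card_univ,
        Fintype.card_fin, nsmul_eq_mul, Real.sqrt_mul (by positivity),
        Real.sqrt_sq (abs_nonneg _)]
    have hsqrtpos : 0 < Real.sqrt p := Real.sqrt_pos.mpr (by exact_mod_cast hppos)
    set S : AddSubgroup ℝ := AddSubgroup.map ρ.toAddMonoidHom M.toAddSubgroup with hS
    have hmem : ∀ x ∈ M, ρ x ∈ S := by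
      intro x hx
      exact ⟨x, hx, rfl⟩
    have hαpos : 0 < |ρ α| := abs_pos.mpr fun h => hα0 (hρinj (by rwa [map_zero]))
    rcases S.dense_or_cyclic with hd | ⟨a, ha⟩
    · obtain ⟨s, hsS, hs⟩ := hd.exists_between hαpos
      obtain ⟨m, hmM, rfl⟩ := hsS
      have hm0 : m ≠ 0 := by
        rintro rfl
        simp only [map_zero] at hs
        exact lt_irrefl _ hs.1
      have := hshort m hmM hm0
      rw [hnorm, hnorm] at this
      have h2 : |ρ α| ≤ |ρ m| := le_of_mul_le_mul_left (by linarith [this]) hsqrtpos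
      have hs' : ρ m ∈ Set.Ioo 0 |ρ α| := hs
      have h3 : |ρ m| < |ρ α| := by
        rw [abs_of_pos hs'.1]; exact hs'.2
      linarith
    · have hmem0 : ρ ((bM 0 : K)) ∈ AddSubgroup.closure {a} := by
        rw [← ha]; exact hmem _ (bM 0).2
      have hmem1 : ρ ((bM 1 : K)) ∈ AddSubgroup.closure {a} := by
        rw [← ha]; exact hmem _ (bM 1).2
      obtain ⟨n0, hn0⟩ := AddSubgroup.mem_closure_singleton.mp hmem0
      obtain ⟨n1, hn1⟩ := AddSubgroup.mem_closure_singleton.mp hmem1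
      have hkeyρ : ρ (n1 • (bM 0 : K) - n0 • (bM 1 : K)) = 0 := by
        rw [map_sub, map_zsmul, map_zsmul, ← hn0, ← hn1, smul_comm, sub_self]
      have hkey : n1 • (bM 0 : K) - n0 • (bM 1 : K) = 0 := by
        apply hρinj
        rw [hkeyρ, map_zero]
      set c : Fin p → ℤ := fun i => (if i = 0 then n1 else 0) + (if i = 1 then -n0 else 0) with hc
      have hsum0 : ∑ i, c i • bM i = 0 := by
        have e1 : ∑ i, c i • bM i = n1 • bM 0 + (-n0) • bM 1 := by
          simp only [hc, add_smul, ite_smul, zero_smul, Finset.sum_add_distrib,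
            Finset.sum_ite_eq', Finset.mem_univ, if_true]
        rw [e1]
        apply Subtype.ext
        push_cast
        rw [neg_smul, ← sub_eq_add_neg]
        exact hkey
      have hc0 := Fintype.linearIndependent_iff.mp bM.linearIndependent c hsum0
      have hn1z : n1 = 0 := by
        have h := hc0 0
        simpa [hc, h01, hp.ne_one] using h
      have hn0z : n0 = 0 := by
        have h := hc0 1
        simpa [hc, h01.symm, hp.ne_one] using h
      have : ρ (bM 0 : K) = 0 := by rw [← hn0, hn0z, zero_smul]
      have hb0 : (bM 0 : K) = 0 := hρinj (this.trans (map_zero ρ).symm)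
      exact bM.ne_zero 0 (Subtype.ext hb0)
  -- order of θ is p, Galois
  have htop : Subgroup.zpowers θ = ⊤ := by
    rw [Subgroup.eq_top_iff']
    exact hgen
  have hdvd : Nat.card (K ≃ₐ[ℚ] K) ∣ p := by
    have h1 : Module.finrank (IntermediateField.fixedField (⊤ : Subgroup (K ≃ₐ[ℚ] K))) K =
        Fintype.card (⊤ : Subgroup (K ≃ₐ[ℚ] K)) :=
      by rw [IntermediateField.finrank_fixedField_eq_card, Nat.card_eq_fintype_card]
    have h2 : Module.finrank ℚ (IntermediateField.fixedField (⊤ : Subgroup (K ≃ₐ[ℚ] K))) *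
        Module.finrank (IntermediateField.fixedField (⊤ : Subgroup (K ≃ₐ[ℚ] K))) K = p := by
      rw [Module.finrank_mul_finrank, hdeg]
    refine ⟨Module.finrank ℚ (IntermediateField.fixedField (⊤ : Subgroup (K ≃ₐ[ℚ] K))), ?_⟩
    rw [← h2, h1]
    rw [← Nat.card_eq_fintype_card, Subgroup.card_top, mul_comm]
  have horder_card : orderOf θ = Nat.card (K ≃ₐ[ℚ] K) := by
    rw [← Nat.card_zpowers, htop, Subgroup.card_top]
  have horder : orderOf θ = p := by
    rcases (Nat.Prime.eq_one_or_self_of_dvd hp _ (horder_card ▸ hdvd)) with h | h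
    · exact absurd (orderOf_eq_one_iff.mp h) hθ1
    · exact h
  have hcardG : Fintype.card (K ≃ₐ[ℚ] K) = p := by
    rw [← Nat.card_eq_fintype_card, ← horder_card, horder]
  haveI hGal : IsGalois ℚ K := IsGalois.of_card_aut_eq_finrank ℚ K (by rw [Nat.card_eq_fintype_card, hcardG, hdeg])
  -- bijection for sums over the Galois group
  have hbij : Function.Bijective (fun i : Fin p => θ ^ (i : ℕ)) := by
    rw [Fintype.bijective_iff_injective_and_card]
    constructor
    · intro i j hij
      have := pow_injOn_Iio_orderOf (by rw [horder]; exact i.2) (by rw [horder]; exact j.2) hij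
      exact Fin.ext this
    · rw [Fintype.card_fin, hcardG]
  have hsum : ∀ x : K, ∑ i : Fin p, (θ ^ (i : ℕ)) x = algebraMap ℚ K (Algebra.trace ℚ K x) := by
    intro x
    rw [trace_eq_sum_automorphisms]
    exact Fintype.sum_bijective _ hbij _ _ fun i => rfl
  -- aeval tools
  set T : Module.End ℚ K := θ.toLinearMap with hT
  have hTpow : ∀ (n : ℕ) (x : K), (T ^ n) x = (θ ^ n) x := by
    intro n x; rw [hT, ← AlgEquiv.pow_toLinearMap]; rfl
  set Φ : Polynomial ℚ := Polynomial.cyclotomic p ℚ with hΦdef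
  have hΦapp : ∀ x : K, (Polynomial.aeval T Φ) x = algebraMap ℚ K (Algebra.trace ℚ K x) := by
    intro x
    have h1 : (Polynomial.aeval T Φ) = ∑ i ∈ Finset.range p, T ^ i := by
      rw [hΦdef, Polynomial.cyclotomic_prime ℚ p, map_sum]
      exact Finset.sum_congr rfl fun i _ => Polynomial.aeval_X_pow ..
    rw [h1, LinearMap.coe_sum, Finset.sum_apply, ← hsum x]
    exact (Finset.sum_congr rfl fun i _ => hTpow i x).trans
      (Fin.sum_univ_eq_sum_range (fun i => (θ ^ i) x) p).symm
  constructor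
  · -- hard direction
    intro hTr
    refine ⟨?_, hmin⟩
    -- step 1 : ℚ-linear independence of β
    have hβindQ : LinearIndependent ℚ β := by
      rw [Fintype.linearIndependent_iff]
      intro c hc
      by_contra hne
      push_neg at hne
      obtain ⟨i₀, hi₀⟩ := hne
      set g : Polynomial ℚ := ∑ i : Fin p, Polynomial.C (c i) * Polynomial.X ^ (i : ℕ) with hg
      have hgα : (Polynomial.aeval T g) α = 0 := by
        rw [hg, map_sum, LinearMap.coe_sum, Finset.sum_apply]
        rw [← hc]
        apply Finset.sum_congr rfl
        intro i _
        rw [map_mul, Polynomial.aeval_C, Polynomial.aeval_X_pow, Module.End.mul_apply, hTpow,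
          Module.algebraMap_end_apply]
      have hgdeg : g.natDegree ≤ p - 1 := by
        apply Polynomial.natDegree_sum_le_of_forall_le
        intro i _
        exact (Polynomial.natDegree_C_mul_X_pow_le (c i) (i : ℕ)).trans
          (Nat.le_pred_of_lt i.2)
      have hgne : g ≠ 0 := by
        intro h0
        have hcoeff : g.coeff (i₀ : ℕ) = c i₀ := by
          rw [hg, Polynomial.finset_sum_coeff]
          have : ∀ i : Fin p, (Polynomial.C (c i) * Polynomial.X ^ (i : ℕ)).coeff (i₀ : ℕ) =
              if i = i₀ then c i else 0 := by
            intro i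
            rw [Polynomial.coeff_C_mul_X_pow]
            congr 1
            · simp [eq_comm, Fin.val_eq_val]
          rw [Finset.sum_congr rfl fun i _ => this i, Finset.sum_ite_eq']
          simp
        rw [h0, Polynomial.coeff_zero] at hcoeff
        exact hi₀ hcoeff.symm
      by_cases hdvdg : Φ ∣ g
      · obtain ⟨q, hq⟩ := hdvdg
        have hΦne : Φ ≠ 0 := Polynomial.cyclotomic_ne_zero p ℚ
        have hqne : q ≠ 0 := fun h => hgne (by rw [hq, h, mul_zero])
        have hΦdeg : Φ.natDegree = p - 1 := by
          rw [hΦdef, Polynomial.natDegree_cyclotomic, Nat.totient_prime hp]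
        have hqdeg : q.natDegree = 0 := by
          have := Polynomial.natDegree_mul hΦne hqne
          rw [← hq, hΦdeg] at this
          omega
        set q0 : ℚ := q.coeff 0 with hq0def
        have hq0 : q = Polynomial.C q0 := Polynomial.eq_C_of_natDegree_eq_zero hqdeg
        have hq0ne : q0 ≠ 0 := by
          intro h
          rw [h, map_zero] at hq0
          exact hqne hq0
        have hkey : q0 • algebraMap ℚ K (Algebra.trace ℚ K α) = 0 := by
          have h2 : (Polynomial.aeval T g) α = q0 • algebraMap ℚ K (Algebra.trace ℚ K α) := by
            rw [hq, hq0, map_mul, Module.End.mul_apply, Polynomial.aeval_C,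
              Module.algebraMap_end_apply, map_smul, hΦapp]
          rw [← h2, hgα]
        rcases smul_eq_zero.mp hkey with h | h
        · exact hq0ne h
        · exact hTr ((algebraMap ℚ K).injective (by rw [h, map_zero]))
      · have hcop : IsCoprime Φ g :=
          (Polynomial.cyclotomic.irreducible_rat hppos).coprime_iff_not_dvd.mpr hdvdg
        obtain ⟨u, w, huw⟩ := hcop
        have hrangeT : ∀ (q : Polynomial ℚ) (r : ℚ),
            (Polynomial.aeval T q) (algebraMap ℚ K r) ∈ Set.range (algebraMap ℚ K) := by
          intro q r
          induction q using Polynomial.induction_on' with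
          | add f g hf hg =>
            obtain ⟨s, hs⟩ := hf
            obtain ⟨t, ht⟩ := hg
            exact ⟨s + t, by rw [map_add, map_add, LinearMap.add_apply, hs, ht]⟩
          | monomial n a =>
            refine ⟨a * r, ?_⟩
            rw [Polynomial.aeval_monomial, Module.End.mul_apply, hTpow,
              AlgEquiv.commutes, Module.algebraMap_end_apply, map_mul, Algebra.smul_def]
        have hαrange : α ∈ Set.range (algebraMap ℚ K) := by
          have h1 : (Polynomial.aeval T (u * Φ + w * g)) α = α := by
            rw [huw, map_one, Module.End.one_apply]
          rw [map_add, map_mul, map_mul, LinearMap.add_apply, Module.End.mul_apply,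
            Module.End.mul_apply, hgα, map_zero, add_zero, hΦapp] at h1
          rw [← h1]
          exact hrangeT u _
        obtain ⟨r, hr⟩ := hαrange
        have hint : IsIntegral ℤ r := by
          apply IsIntegral.tower_bot (algebraMap ℚ K).injective
          rw [hr]
          exact hMint α hαM
        obtain ⟨n, hn⟩ := IsIntegrallyClosed.isIntegral_iff.mp hint
        apply hα
        refine ⟨n, ?_⟩
        rw [← hr, ← hn]
        rw [← IsScalarTower.algebraMap_apply ℤ ℚ K, eq_intCast]
    -- step 2 : real linear independence via the trace form
    have card_eq : Fintype.card (Fin p) = Module.finrank ℚ K := by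
      rw [Fintype.card_fin, hdeg]
    set b : Module.Basis (Fin p) ℚ K := basisOfLinearIndependentOfCardEqFinrank hβindQ card_eq with hb
    have hbcoe : ∀ i, b i = β i := fun i => by
      rw [hb, coe_basisOfLinearIndependentOfCardEqFinrank]
    set Tm : Matrix (Fin p) (Fin p) ℚ :=
      Matrix.of (fun i j => Algebra.trace ℚ K (β i * β j)) with hTm
    have hTmunit : IsUnit Tm := by
      rw [← Matrix.vecMul_injective_iff_isUnit]
      have hker : ∀ d : Fin p → ℚ, Tm.vecMul d = 0 → d = 0 := by
        intro d hd
        have hx : ∀ j, (Algebra.traceForm ℚ K) (∑ i, d i • β i) (β j) = 0 := by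
          intro j
          have hdj := congrFun hd j
          simp only [Matrix.vecMul, dotProduct, hTm, Matrix.of_apply,
            Pi.zero_apply] at hdj
          rw [map_sum, LinearMap.coe_sum, Finset.sum_apply]
          rw [← hdj]
          apply Finset.sum_congr rfl
          intro i _
          rw [map_smul, LinearMap.smul_apply, Algebra.traceForm_apply, smul_eq_mul]
        have hxall : (Algebra.traceForm ℚ K) (∑ i, d i • β i) = 0 := by
          apply b.ext
          intro i
          rw [hbcoe i, LinearMap.zero_apply]
          exact hx i
        have hzero : (∑ i, d i • β i) = 0 :=
          (traceForm_nondegenerate ℚ K).1 _ (fun y => by rw [hxall]; rfl)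
        funext i
        exact Fintype.linearIndependent_iff.mp hβindQ d hzero i
      intro d e hde
      have hde' : Matrix.vecMul d Tm = Matrix.vecMul e Tm := hde
      have hsub : Tm.vecMul (d - e) = 0 := by
        rw [Matrix.sub_vecMul, hde', sub_self]
      exact sub_eq_zero.mp (hker _ hsub)
    have hTRunit : IsUnit (Tm.map (Rat.cast : ℚ → ℝ)) := by
      have := hTmunit.map (algebraMap ℚ ℝ).mapMatrix
      rwa [RingHom.mapMatrix_apply] at this
    have hinjR := Matrix.vecMul_injective_iff_isUnit.mpr hTRunit
    -- sums in EuclideanSpace evaluate coordinatewise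
    have hsum_apply : ∀ (w : Fin p → EuclideanSpace ℝ (Fin p)) (l : Fin p),
        (∑ i, w i) l = ∑ i, w i l := by
      intro w l
      exact map_sum (AddMonoidHom.mk' (fun x : EuclideanSpace ℝ (Fin p) => x l)
        (fun _ _ => rfl)) w Finset.univ
    rw [Fintype.linearIndependent_iff]
    intro c hc
    have hcoord : ∀ l : Fin p, ∑ i, c i * ρ ((θ ^ (l : ℕ)) (β i)) = 0 := by
      intro l
      have h0 : (∑ i, c i • σ (β i)) l = 0 := by rw [hc]; rfl
      rw [hsum_apply] at h0
      rw [← h0]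
      apply Finset.sum_congr rfl
      intro i _
      have : σ (β i) l = ρ ((θ ^ (l : ℕ)) (β i)) := by rw [hσ]
      rw [← this]
      rfl
    have hGram : ∀ i j : Fin p, ∑ l : Fin p, ρ ((θ ^ (l : ℕ)) (β i)) * ρ ((θ ^ (l : ℕ)) (β j)) =
        ((Algebra.trace ℚ K (β i * β j) : ℚ) : ℝ) := by
      intro i j
      have h1 : ∀ l : Fin p, ρ ((θ ^ (l : ℕ)) (β i)) * ρ ((θ ^ (l : ℕ)) (β j)) =
          ρ ((θ ^ (l : ℕ)) (β i * β j)) := by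
        intro l
        rw [map_mul, map_mul]
      rw [Finset.sum_congr rfl fun l _ => h1 l, ← map_sum, hsum (β i * β j)]
      rw [show (algebraMap ℚ K) (Algebra.trace ℚ K (β i * β j)) =
        ((Algebra.trace ℚ K (β i * β j) : ℚ) : K) from eq_ratCast _ _, map_ratCast]
    have hrow : Matrix.vecMul c (Tm.map (Rat.cast : ℚ → ℝ)) = 0 := by
      funext j
      simp only [Matrix.vecMul, dotProduct, Matrix.map_apply, hTm, Matrix.of_apply,
        Pi.zero_apply]
      have : ∀ i : Fin p, c i * ((Algebra.trace ℚ K (β i * β j) : ℚ) : ℝ) =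
          ∑ l : Fin p, (c i * ρ ((θ ^ (l : ℕ)) (β i))) * ρ ((θ ^ (l : ℕ)) (β j)) := by
        intro i
        rw [← hGram i j, Finset.mul_sum]
        apply Finset.sum_congr rfl
        intro l _
        ring
      rw [Finset.sum_congr rfl fun i _ => this i, Finset.sum_comm]
      rw [Finset.sum_congr rfl fun l _ => (Finset.sum_mul _ _ _).symm]
      rw [Finset.sum_congr rfl fun l (_ : l ∈ Finset.univ) => by rw [hcoord l, zero_mul]]
      rw [Finset.sum_const_zero]
    have hc0 : c = 0 := hinjR (show Matrix.vecMul c (Tm.map (Rat.cast : ℚ → ℝ)) =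
      Matrix.vecMul 0 (Tm.map (Rat.cast : ℚ → ℝ)) by rw [hrow, Matrix.zero_vecMul])
    intro i
    rw [hc0]
    rfl
  · -- easy direction
    rintro ⟨hind, -⟩ htr0
    have hzero : ∑ i : Fin p, σ (β i) = 0 := by
      have h1 : ∑ i : Fin p, β i = 0 := by
        rw [hβdef]
        rw [hsum α, htr0, map_zero]
      have h2 : ∑ i : Fin p, F (β i) = F (∑ i : Fin p, β i) := (map_sum F β Finset.univ).symm
      rw [h1, map_zero] at h2
      exact h2
    have := Fintype.linearIndependent_iff.mp hind (fun _ => 1) (by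
      simp only [one_smul]; exact hzero) ⟨0, hppos⟩
    exact one_ne_zero this
end
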